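/- Let X be a normed complex vector space, let Ω be a compact Hausdorff topological space, and let j : Ω → X* be a map into the continuous dual of X such that (i) for every x ∈ X the function ω ↦ (j ω)(x) is continuous on Ω, and (ii) for every x ∈ X one has ‖x‖ = sup_{ω ∈ Ω} |(j ω)(x)|. Then for every continuous linear functional ℓ* on X there exists a complex Borel measure ρ on Ω (of finite total variation) such that for all x ∈ X, ℓ*(x) = ∫_Ω (j ω)(x) dρ(ω). -/

import Mathlib

open MeasureTheory


open MeasureTheory BoundedContinuousFunction NNReal ENNReal Set TopologicalSpace

noncomputable section RMK

set_option linter.unusedSectionVars false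

variable {Ω : Type*} [TopologicalSpace Ω] [CompactSpace Ω] [T2Space Ω]

section BcAux

variable (Λ : (Ω →ᵇ ℝ≥0) →ₗ[ℝ≥0] ℝ≥0)

/-- the Riesz content on bounded continuous functions -/
def bcRieszContentAux : Compacts Ω → ℝ≥0 := fun K =>
  sInf (Λ '' { f : Ω →ᵇ ℝ≥0 | ∀ x ∈ K, (1 : ℝ≥0) ≤ f x })

theorem bcRieszContentAux_image_nonempty (K : Compacts Ω) :
    (Λ '' { f : Ω →ᵇ ℝ≥0 | ∀ x ∈ K, (1 : ℝ≥0) ≤ f x }).Nonempty := by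
  rw [image_nonempty]
  use (1 : Ω →ᵇ ℝ≥0)
  intro x _
  simp only [BoundedContinuousFunction.coe_one, Pi.one_apply]; rfl

theorem bcRieszContentAux_mono {K₁ K₂ : Compacts Ω} (h : K₁ ≤ K₂) :
    bcRieszContentAux Λ K₁ ≤ bcRieszContentAux Λ K₂ :=
  csInf_le_csInf (OrderBot.bddBelow _) (bcRieszContentAux_image_nonempty Λ K₂)
    (image_mono (setOf_subset_setOf.mpr fun _ f_hyp x x_in_K₁ => f_hyp x (h x_in_K₁)))

theorem bcRieszContentAux_le {K : Compacts Ω} {f : Ω →ᵇ ℝ≥0} (h : ∀ x ∈ K, (1 : ℝ≥0) ≤ f x) :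
    bcRieszContentAux Λ K ≤ Λ f :=
  csInf_le (OrderBot.bddBelow _) ⟨f, ⟨h, rfl⟩⟩

theorem bcExists_lt_rieszContentAux_add_pos (K : Compacts Ω) {ε : ℝ≥0} (εpos : 0 < ε) :
    ∃ f : Ω →ᵇ ℝ≥0, (∀ x ∈ K, (1 : ℝ≥0) ≤ f x) ∧ Λ f < bcRieszContentAux Λ K + ε := by
  obtain ⟨α, ⟨⟨f, f_hyp⟩, α_hyp⟩⟩ :=
    exists_lt_of_csInf_lt (bcRieszContentAux_image_nonempty Λ K)
      (lt_add_of_pos_right (bcRieszContentAux Λ K) εpos)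
  refine ⟨f, f_hyp.left, ?_⟩
  rw [f_hyp.right]
  exact α_hyp

theorem bcRieszContentAux_sup_le (K1 K2 : Compacts Ω) :
    bcRieszContentAux Λ (K1 ⊔ K2) ≤ bcRieszContentAux Λ K1 + bcRieszContentAux Λ K2 := by
  apply _root_.le_of_forall_pos_le_add
  intro ε εpos
  obtain ⟨f1, f_test_function_K1⟩ := bcExists_lt_rieszContentAux_add_pos Λ K1 (half_pos εpos)
  obtain ⟨f2, f_test_function_K2⟩ := bcExists_lt_rieszContentAux_add_pos Λ K2 (half_pos εpos)
  have f_test_function_union : ∀ x ∈ K1 ⊔ K2, (1 : ℝ≥0) ≤ (f1 + f2) x := by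
    rintro x (x_in_K1 | x_in_K2)
    · exact le_add_right (f_test_function_K1.left x x_in_K1)
    · exact le_add_left (f_test_function_K2.left x x_in_K2)
  apply (bcRieszContentAux_le Λ f_test_function_union).trans (le_of_lt _)
  rw [map_add]
  apply lt_of_lt_of_le (_root_.add_lt_add f_test_function_K1.right f_test_function_K2.right)
    (le_of_eq _)
  rw [add_assoc, add_comm (ε / 2), add_assoc, add_halves ε, add_assoc]

end BcAux

/-- pointwise difference of nonneg bcfs -/
def bsub (g f : Ω →ᵇ ℝ≥0) : Ω →ᵇ ℝ≥0 :=
  BoundedContinuousFunction.mkOfCompact ⟨fun ω => g ω - f ω, g.continuous.sub f.continuous⟩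

lemma bsub_apply (g f : Ω →ᵇ ℝ≥0) (ω : Ω) : bsub g f ω = g ω - f ω := rfl

lemma add_bsub {f g : Ω →ᵇ ℝ≥0} (h : ∀ ω, f ω ≤ g ω) : f + bsub g f = g := by
  ext ω
  simp only [BoundedContinuousFunction.coe_add, Pi.add_apply, bsub_apply]
  exact_mod_cast add_tsub_cancel_of_le (h ω)

lemma lam_mono (Λ : (Ω →ᵇ ℝ≥0) →ₗ[ℝ≥0] ℝ≥0) {f g : Ω →ᵇ ℝ≥0} (h : ∀ ω, f ω ≤ g ω) :
    Λ f ≤ Λ g := by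
  have : Λ g = Λ f + Λ (bsub g f) := by rw [← map_add, add_bsub h]
  simp [this]

/-- The Riesz content is additive on disjoint compacts. -/
lemma bcRieszContentAux_union (Λ : (Ω →ᵇ ℝ≥0) →ₗ[ℝ≥0] ℝ≥0) (K₁ K₂ : Compacts Ω)
    (hd : Disjoint (K₁ : Set Ω) (K₂ : Set Ω)) :
    bcRieszContentAux Λ (K₁ ⊔ K₂) = bcRieszContentAux Λ K₁ + bcRieszContentAux Λ K₂ := by
  refine le_antisymm (bcRieszContentAux_sup_le Λ K₁ K₂) ?_
  -- Urysohn: continuous g with g = 0 on K₁, g = 1 on K₂, 0 ≤ g ≤ 1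
  obtain ⟨g, hg0, hg1, hg01⟩ :=
    exists_continuous_zero_one_of_isCompact K₁.isCompact K₂.isCompact.isClosed hd
  set gn : Ω →ᵇ ℝ≥0 := BoundedContinuousFunction.mkOfCompact
    ⟨fun ω => Real.toNNReal (g ω), continuous_real_toNNReal.comp g.continuous⟩ with hgn
  have hgn_le_one : ∀ ω, gn ω ≤ 1 := by
    intro ω
    simp only [hgn, BoundedContinuousFunction.mkOfCompact_apply, ContinuousMap.coe_mk]
    exact Real.toNNReal_le_one.2 (hg01 ω).2
  -- it suffices to bound against Λ h for any admissible h
  have key : ∀ h : Ω →ᵇ ℝ≥0, (∀ x ∈ (K₁ ⊔ K₂ : Compacts Ω), (1 : ℝ≥0) ≤ h x) →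
      bcRieszContentAux Λ K₁ + bcRieszContentAux Λ K₂ ≤ Λ h := by
    intro h hh
    have h1 : bcRieszContentAux Λ K₁ ≤ Λ (h * (bsub 1 gn)) := by
      apply bcRieszContentAux_le
      intro x hx
      have : gn x = 0 := by
        simp [hgn, hg0 hx]
      have hb : bsub 1 gn x = 1 := by simp [bsub_apply, this]
      have hhx : (1:ℝ≥0) ≤ h x := hh x (Or.inl hx)
      calc (1:ℝ≥0) = 1 * 1 := by ring
      _ ≤ h x * (bsub 1 gn x) := by rw [hb]; exact mul_le_mul_left hhx 1
      _ = (h * bsub 1 gn) x := rfl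
    have h2 : bcRieszContentAux Λ K₂ ≤ Λ (h * gn) := by
      apply bcRieszContentAux_le
      intro x hx
      have : gn x = 1 := by
        simp [hgn, hg1 hx]
      have hhx : (1:ℝ≥0) ≤ h x := hh x (Or.inr hx)
      calc (1:ℝ≥0) = 1 * 1 := by ring
      _ ≤ h x * gn x := by rw [this]; exact mul_le_mul_left hhx 1
      _ = (h * gn) x := rfl
    have hsum : h * (bsub 1 gn) + h * gn = h := by
      ext ω
      have : ((1:ℝ≥0) - gn ω) + gn ω = 1 := tsub_add_cancel_of_le (hgn_le_one ω)
      push_cast [mul_comm]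
      calc (h ω : ℝ) * ((bsub 1 gn) ω : ℝ) + (h ω : ℝ) * gn ω
          = (h ω : ℝ) * (((bsub 1 gn) ω : ℝ) + gn ω) := by ring
        _ = h ω := by
            rw [bsub_apply]
            rw [show (((1:Ω →ᵇ ℝ≥0) ω - gn ω) : ℝ≥0) = ((1:ℝ≥0) - gn ω) from rfl]
            norm_cast
            rw [this, mul_one]
    calc bcRieszContentAux Λ K₁ + bcRieszContentAux Λ K₂ ≤ Λ (h * bsub 1 gn) + Λ (h * gn) :=
          add_le_add h1 h2
      _ = Λ (h * bsub 1 gn + h * gn) := (map_add Λ _ _).symm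
      _ = Λ h := by rw [hsum]
  -- conclude by inf characterization
  apply le_csInf (bcRieszContentAux_image_nonempty Λ (K₁ ⊔ K₂))
  rintro b ⟨h, hh, rfl⟩
  exact key h hh

/-- The Riesz content as a `Content`. -/
def bcRieszContent (Λ : (Ω →ᵇ ℝ≥0) →ₗ[ℝ≥0] ℝ≥0) : Content Ω where
  toFun := bcRieszContentAux Λ
  mono' := fun K₁ K₂ h => bcRieszContentAux_mono Λ h
  sup_disjoint' := fun K₁ K₂ hd _ _ => bcRieszContentAux_union Λ K₁ K₂ hd
  sup_le' := fun K₁ K₂ => bcRieszContentAux_sup_le Λ K₁ K₂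

section Measure

variable [MeasurableSpace Ω] [BorelSpace Ω]

variable (Λ : (Ω →ᵇ ℝ≥0) →ₗ[ℝ≥0] ℝ≥0)

/-- The Riesz measure. -/
def bcRieszMeasure : Measure Ω := (bcRieszContent Λ).measure

lemma bcRieszContentAux_top : bcRieszContentAux Λ ⊤ = Λ 1 := by
  refine le_antisymm (bcRieszContentAux_le Λ fun x _ => le_refl 1) ?_
  apply le_csInf (bcRieszContentAux_image_nonempty Λ ⊤)
  rintro b ⟨h, hh, rfl⟩
  exact lam_mono Λ fun ω => hh ω trivial

lemma bcRieszMeasure_univ : bcRieszMeasure Λ Set.univ = Λ 1 := by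
  rw [bcRieszMeasure, Content.measure_apply _ MeasurableSet.univ,
    (bcRieszContent Λ).outerMeasure_of_isOpen univ isOpen_univ]
  have hcoe : ∀ K : Compacts Ω, (bcRieszContent Λ) K = (bcRieszContentAux Λ K : ℝ≥0∞) := fun _ => rfl
  refine le_antisymm ?_ ?_
  · refine iSup_le fun K => iSup_le fun _ => ?_
    rw [hcoe]
    exact ENNReal.coe_le_coe.2 (le_trans (bcRieszContentAux_mono Λ (le_top : K ≤ ⊤))
      (le_of_eq (bcRieszContentAux_top Λ)))
  · have := (bcRieszContent Λ).le_innerContent ⊤ ⟨univ, isOpen_univ⟩ (subset_refl _)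
    rw [hcoe, bcRieszContentAux_top] at this
    exact this

instance : IsFiniteMeasure (bcRieszMeasure Λ) := by
  constructor
  rw [bcRieszMeasure_univ]
  exact ENNReal.coe_lt_top


lemma coe_sum_bcf {n : ℕ} (g : Fin n → (Ω →ᵇ ℝ≥0)) (ω : Ω) :
    (∑ i, g i) ω = ∑ i, g i ω := by
  induction (Finset.univ : Finset (Fin n)) using Finset.induction_on with
  | empty => simp
  | insert h ih => simp_all

lemma lam_le_lintegral (f : Ω →ᵇ ℝ≥0) :
    (Λ f : ℝ≥0∞) ≤ ∫⁻ ω, (f ω : ℝ≥0∞) ∂(bcRieszMeasure Λ) := by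
  set μ := bcRieszMeasure Λ with hμ
  have hfm : Measurable fun ω => (f ω : ℝ≥0∞) :=
    measurable_coe_nnreal_ennreal.comp f.continuous.measurable
  -- the ε-estimate
  have key : ∀ e : ℝ≥0, 0 < e → (Λ f : ℝ≥0∞) ≤
      (∫⁻ ω, (f ω : ℝ≥0∞) ∂μ) + e * (Λ 1) + e + e := by
    intro e he
    -- bound on f
    obtain ⟨M, hM⟩ : ∃ M : ℝ≥0, ∀ ω, f ω ≤ M := by
      obtain ⟨M, hM⟩ := (isCompact_range f.continuous).bddAbove
      exact ⟨M, fun ω => hM (Set.mem_range_self ω)⟩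
    set n : ℕ := ⌊M / e⌋₊ + 1 with hn
    have hMn : M < (n : ℝ≥0) * e := by
      have h1 : M / e < (n : ℝ≥0) := by
        have := Nat.lt_succ_floor (M / e)
        exact_mod_cast this
      calc M = (M / e) * e := by rw [div_mul_cancel₀ _ (ne_of_gt he)]
        _ < (n : ℝ≥0) * e := mul_lt_mul_of_pos_right h1 he
    set E : ℕ → Set Ω := fun i => (fun ω => f ω) ⁻¹' (Ico ((i : ℝ≥0) * e) (((i : ℝ≥0) + 1) * e))
      with hE
    have hEm : ∀ i, MeasurableSet (E i) := fun i =>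
      f.continuous.measurable measurableSet_Ico
    have hEd : Pairwise (Function.onFun Disjoint E) := by
      intro i j hij
      rw [Function.onFun, Set.disjoint_left]
      rintro ω ⟨hi1, hi2⟩ ⟨hj1, hj2⟩
      refine hij ?_
      rcases Nat.lt_or_ge i j with h | h
      · exfalso
        have : ((i : ℝ≥0) + 1) ≤ (j : ℝ≥0) := by exact_mod_cast Nat.succ_le_of_lt h
        exact absurd (lt_of_lt_of_le hi2 (le_trans (mul_le_mul_left this e) hj1))
          (lt_irrefl _)
      rcases Nat.lt_or_ge j i with h' | h'
      · exfalso
        have : ((j : ℝ≥0) + 1) ≤ (i : ℝ≥0) := by exact_mod_cast Nat.succ_le_of_lt h'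
        exact absurd (lt_of_lt_of_le hj2 (le_trans (mul_le_mul_left this e) hi1))
          (lt_irrefl _)
      · exact le_antisymm (by omega) (by omega)
    have hmemE : ∀ ω, ∃ i : ℕ, i < n ∧ ω ∈ E i := by
      intro ω
      have hfloor_lt : ⌊f ω / e⌋₊ < n := by
        have h1 : f ω / e ≤ M / e := by
          gcongr
          exact hM ω
        have := Nat.floor_mono h1
        omega
      refine ⟨⌊f ω / e⌋₊, hfloor_lt, ?_, ?_⟩
      · -- lower bound
        have h1 : ((⌊f ω / e⌋₊ : ℝ≥0)) ≤ f ω / e := Nat.floor_le (by positivity)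
        calc ((⌊f ω / e⌋₊ : ℝ≥0)) * e ≤ (f ω / e) * e := mul_le_mul_left h1 e
          _ = f ω := div_mul_cancel₀ _ (ne_of_gt he)
      · -- upper bound
        have h1 : f ω / e < (⌊f ω / e⌋₊ : ℝ≥0) + 1 := by
          have := Nat.lt_succ_floor (f ω / e)
          push_cast at this ⊢
          exact_mod_cast this
        calc f ω = (f ω / e) * e := (div_mul_cancel₀ _ (ne_of_gt he)).symm
          _ < ((⌊f ω / e⌋₊ : ℝ≥0) + 1) * e := mul_lt_mul_of_pos_right h1 he
    have hEuniv : (⋃ i, E i) = univ := by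
      refine eq_univ_of_forall fun ω => ?_
      obtain ⟨i, _, hi⟩ := hmemE ω
      exact Set.mem_iUnion.2 ⟨i, hi⟩
    -- choice of δ and open sets
    set C : ℝ≥0 := (n : ℝ≥0) * ((n : ℝ≥0) * e) with hC
    set δ : ℝ≥0 := e / (C + 1) with hδ
    have hδpos : 0 < δ := div_pos he (by positivity)
    have houtfin : ∀ A : Set Ω, (bcRieszContent Λ).outerMeasure A ≠ ⊤ := fun A =>
      ne_top_of_le_ne_top ((bcRieszContent Λ).outerMeasure_lt_top_of_isCompact
        isCompact_univ).ne (measure_mono (subset_univ A))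
    have hV : ∀ i : Fin n, ∃ V : Opens Ω, E i ⊆ V ∧
        (bcRieszContent Λ).outerMeasure V ≤ (bcRieszContent Λ).outerMeasure (E i) + δ :=
      fun i => (bcRieszContent Λ).outerMeasure_exists_open (houtfin _) (ne_of_gt hδpos)
    choose V hVE hVle using hV
    set U : Fin n → Set Ω := fun i =>
      (V i : Set Ω) ∩ (fun ω => f ω) ⁻¹' (Iio (((i : ℕ) : ℝ≥0) * e + e)) with hU
    have hUopen : ∀ i, IsOpen (U i) := fun i =>
      (V i).isOpen.inter (isOpen_Iio.preimage f.continuous)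
    have hEU : ∀ i : Fin n, E ((i : ℕ)) ⊆ U i := by
      intro i
      refine subset_inter (hVE i) fun ω hω => ?_
      have h2 := hω.2
      simp only [Set.mem_preimage, Set.mem_Iio]
      calc f ω < (((i : ℕ) : ℝ≥0) + 1) * e := h2
        _ = ((i : ℕ) : ℝ≥0) * e + e := by ring
    have hUcov : (univ : Set Ω) ⊆ ⋃ i, U i := by
      intro ω _
      obtain ⟨i, hin, hi⟩ := hmemE ω
      exact Set.mem_iUnion.2 ⟨⟨i, hin⟩, hEU ⟨i, hin⟩ hi⟩
    obtain ⟨pou, hpou⟩ := PartitionOfUnity.exists_isSubordinate isClosed_univ U hUopen hUcov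
    set g : Fin n → (Ω →ᵇ ℝ≥0) := fun i => BoundedContinuousFunction.mkOfCompact
      ⟨fun ω => Real.toNNReal (pou i ω),
        continuous_real_toNNReal.comp (pou i).continuous⟩ with hg
    have hg_apply : ∀ i ω, g i ω = Real.toNNReal (pou i ω) := fun i ω => rfl
    have hg_le_one : ∀ i ω, g i ω ≤ 1 := by
      intro i ω
      rw [hg_apply]
      exact Real.toNNReal_le_one.2 (pou.le_one i ω)
    have hgsum : ∀ ω, ∑ i, g i ω = 1 := by
      intro ω
      have h1 := pou.sum_eq_one (mem_univ ω)
      rw [finsum_eq_sum_of_fintype] at h1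
      apply NNReal.coe_injective
      push_cast
      rw [← h1]
      refine Finset.sum_congr rfl fun i _ => ?_
      rw [hg_apply]
      exact Real.coe_toNNReal _ (pou.nonneg i ω)
    have hfg : Λ f = ∑ i : Fin n, Λ (g i * f) := by
      rw [← map_sum]
      congr 1
      ext ω
      rw [coe_sum_bcf]
      push_cast
      calc (f ω : ℝ) = (1 : ℝ≥0) * f ω := by push_cast; ring
        _ = ((∑ i, g i ω : ℝ≥0) : ℝ) * f ω := by rw [hgsum]
        _ = ∑ i, ((g i ω : ℝ) * f ω) := by push_cast [Finset.sum_mul]; rfl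
    have hΛgf : ∀ i : Fin n, Λ (g i * f) ≤ (((i : ℕ) : ℝ≥0) * e + e) * Λ (g i) := by
      intro i
      set c : ℝ≥0 := ((i : ℕ) : ℝ≥0) * e + e with hc
      have hpt : ∀ ω, (g i * f) ω ≤ (c • g i) ω := by
        intro ω
        by_cases hz : g i ω = 0
        · show g i ω * f ω ≤ c * g i ω
          simp [hz]
        · have hne : pou i ω ≠ 0 := by
            intro h0
            exact hz (by rw [hg_apply, h0]; simp)
          have hωU : ω ∈ U i := hpou i (subset_closure (by simpa [Function.support] using hne))
          have hfω : f ω < c := hωU.2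
          show g i ω * f ω ≤ c * g i ω
          calc g i ω * f ω ≤ g i ω * c := mul_le_mul_right hfω.le _
            _ = c * g i ω := mul_comm _ _
      calc Λ (g i * f) ≤ Λ (c • g i) := lam_mono Λ hpt
        _ = c * Λ (g i) := by rw [LinearMap.map_smul, smul_eq_mul]
    have hΛg : ∀ i : Fin n, (Λ (g i) : ℝ≥0∞) ≤ μ (E (i : ℕ)) + δ := by
      intro i
      set K : Compacts Ω := ⟨tsupport (pou i), (isClosed_tsupport _).isCompact⟩ with hK
      have step1 : Λ (g i) ≤ bcRieszContentAux Λ K := by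
        apply le_csInf (bcRieszContentAux_image_nonempty Λ K)
        rintro b ⟨h, hh, rfl⟩
        apply lam_mono Λ
        intro ω
        by_cases hω : ω ∈ tsupport (pou i)
        · exact le_trans (hg_le_one i ω) (hh ω hω)
        · have : pou i ω = 0 := image_eq_zero_of_notMem_tsupport hω
          rw [hg_apply, this]
          simp
      have step2 : (bcRieszContentAux Λ K : ℝ≥0∞) ≤ (bcRieszContent Λ).outerMeasure (U i) := by
        have h1 := (bcRieszContent Λ).le_innerContent K ⟨U i, hUopen i⟩ (hpou i)
        rwa [← (bcRieszContent Λ).outerMeasure_opens ⟨U i, hUopen i⟩] at h1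
      have step3 : (bcRieszContent Λ).outerMeasure (U i) ≤ μ (E (i : ℕ)) + δ := by
        calc (bcRieszContent Λ).outerMeasure (U i)
            ≤ (bcRieszContent Λ).outerMeasure (V i) := measure_mono inter_subset_left
          _ ≤ (bcRieszContent Λ).outerMeasure (E (i : ℕ)) + δ := hVle i
          _ = μ (E (i : ℕ)) + δ := by
              rw [hμ, bcRieszMeasure, Content.measure_apply _ (hEm (i : ℕ))]
      exact le_trans (ENNReal.coe_le_coe.2 step1) (le_trans step2 step3)
    -- the integral lower bound
    have hInt : ∑ i : Fin n, (((i : ℕ) : ℝ≥0) * e : ℝ≥0∞) * μ (E (i : ℕ))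
        ≤ ∫⁻ ω, (f ω : ℝ≥0∞) ∂μ := by
      have h1 : ∫⁻ ω, (f ω : ℝ≥0∞) ∂μ = ∑' i : ℕ, ∫⁻ ω in E i, (f ω : ℝ≥0∞) ∂μ := by
        rw [← lintegral_iUnion hEm hEd, hEuniv, Measure.restrict_univ]
      rw [h1]
      calc ∑ i : Fin n, (((i : ℕ) : ℝ≥0) * e : ℝ≥0∞) * μ (E (i : ℕ))
          = ∑ i ∈ Finset.range n, ((i : ℝ≥0) * e : ℝ≥0∞) * μ (E i) := by
            rw [Finset.sum_range fun i => ((i : ℝ≥0) * e : ℝ≥0∞) * μ (E i)]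
        _ ≤ ∑ i ∈ Finset.range n, ∫⁻ ω in E i, (f ω : ℝ≥0∞) ∂μ := by
            refine Finset.sum_le_sum fun i _ => ?_
            rw [← setLIntegral_const (E i) (((i : ℝ≥0) * e : ℝ≥0∞))]
            refine setLIntegral_mono hfm fun ω hω => ?_
            exact_mod_cast ENNReal.coe_le_coe.2 hω.1
        _ ≤ ∑' i : ℕ, ∫⁻ ω in E i, (f ω : ℝ≥0∞) ∂μ := ENNReal.sum_le_tsum _
    have hEsum : ∑ i : Fin n, μ (E (i : ℕ)) ≤ (Λ 1 : ℝ≥0∞) := by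
      have h1 : ∑ i : Fin n, μ (E (i : ℕ)) = ∑ i ∈ Finset.range n, μ (E i) :=
        (Finset.sum_range fun i => μ (E i)).symm
      rw [h1, ← measure_biUnion_finset ?_ fun i _ => hEm i]
      · calc μ (⋃ i ∈ Finset.range n, E i) ≤ μ univ := measure_mono (subset_univ _)
          _ = (Λ 1 : ℝ≥0∞) := bcRieszMeasure_univ Λ
      · intro i _ j _ hij
        exact hEd hij
    have hδsum : ∑ i : Fin n, ((((i : ℕ) : ℝ≥0) * e + e : ℝ≥0) : ℝ≥0∞) * (δ : ℝ≥0∞)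
        ≤ (e : ℝ≥0∞) := by
      have h1 : ∑ i : Fin n, (((i : ℕ) : ℝ≥0) * e + e) * δ ≤ e := by
        have h2 : ∀ i : Fin n, (((i : ℕ) : ℝ≥0) * e + e) * δ ≤ ((n : ℝ≥0) * e) * δ := by
          intro i
          refine mul_le_mul_left ?_ δ
          have : ((i : ℕ) : ℝ≥0) + 1 ≤ (n : ℝ≥0) := by exact_mod_cast i.2
          calc ((i : ℕ) : ℝ≥0) * e + e = (((i : ℕ) : ℝ≥0) + 1) * e := by ring
            _ ≤ (n : ℝ≥0) * e := mul_le_mul_left this e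
        calc ∑ i : Fin n, (((i : ℕ) : ℝ≥0) * e + e) * δ
            ≤ ∑ _i : Fin n, ((n : ℝ≥0) * e) * δ := Finset.sum_le_sum fun i _ => h2 i
          _ = (n : ℝ≥0) * (((n : ℝ≥0) * e) * δ) := by
              rw [Finset.sum_const, Finset.card_univ, Fintype.card_fin]
              simp [nsmul_eq_mul]
          _ = C * δ := by rw [hC]; ring
          _ ≤ e := by
              rw [hδ]
              rw [div_eq_mul_inv, ← mul_assoc]
              calc C * e * (C + 1)⁻¹ ≤ (C + 1) * e * (C + 1)⁻¹ := by
                    exact mul_le_mul_left (mul_le_mul_left (le_add_of_nonneg_right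
                      (by positivity)) e) _
                _ = e * ((C + 1) * (C + 1)⁻¹) := by ring
                _ = e := by
                    rw [mul_inv_cancel₀ (by positivity), mul_one]
      calc ∑ i : Fin n, ((((i : ℕ) : ℝ≥0) * e + e : ℝ≥0) : ℝ≥0∞) * (δ : ℝ≥0∞)
          = ((∑ i : Fin n, (((i : ℕ) : ℝ≥0) * e + e) * δ : ℝ≥0) : ℝ≥0∞) := by
            push_cast
            rfl
        _ ≤ (e : ℝ≥0∞) := ENNReal.coe_le_coe.2 h1
    -- put everything together
    calc (Λ f : ℝ≥0∞) = ∑ i : Fin n, (Λ (g i * f) : ℝ≥0∞) := by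
          rw [hfg]
          push_cast
          rfl
      _ ≤ ∑ i : Fin n, ((((i : ℕ) : ℝ≥0) * e + e : ℝ≥0) : ℝ≥0∞) * (Λ (g i) : ℝ≥0∞) := by
          refine Finset.sum_le_sum fun i _ => ?_
          rw [← ENNReal.coe_mul]
          exact ENNReal.coe_le_coe.2 (hΛgf i)
      _ ≤ ∑ i : Fin n, ((((i : ℕ) : ℝ≥0) * e + e : ℝ≥0) : ℝ≥0∞) * (μ (E (i : ℕ)) + δ) :=
          Finset.sum_le_sum fun i _ => mul_le_mul_right (hΛg i) _
      _ = ∑ i : Fin n, ((((i : ℕ) : ℝ≥0) * e : ℝ≥0∞) * μ (E (i : ℕ))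
            + (e : ℝ≥0∞) * μ (E (i : ℕ))
            + ((((i : ℕ) : ℝ≥0) * e + e : ℝ≥0) : ℝ≥0∞) * (δ : ℝ≥0∞)) := by
          refine Finset.sum_congr rfl fun i _ => ?_
          push_cast
          ring
      _ = ∑ i : Fin n, (((i : ℕ) : ℝ≥0) * e : ℝ≥0∞) * μ (E (i : ℕ))
            + (e : ℝ≥0∞) * ∑ i : Fin n, μ (E (i : ℕ))
            + ∑ i : Fin n, ((((i : ℕ) : ℝ≥0) * e + e : ℝ≥0) : ℝ≥0∞) * (δ : ℝ≥0∞) := by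
          rw [Finset.sum_add_distrib, Finset.sum_add_distrib, Finset.mul_sum]
      _ ≤ (∫⁻ ω, (f ω : ℝ≥0∞) ∂μ) + (e : ℝ≥0∞) * (Λ 1 : ℝ≥0∞) + (e : ℝ≥0∞) := by
          exact add_le_add (add_le_add hInt (mul_le_mul_right hEsum _)) hδsum
      _ ≤ (∫⁻ ω, (f ω : ℝ≥0∞) ∂μ) + (e : ℝ≥0∞) * (Λ 1) + (e : ℝ≥0∞) + (e : ℝ≥0∞) :=
          le_add_of_nonneg_right (by positivity)
  -- conclude
  refine ENNReal.le_of_forall_pos_le_add fun ε hε hfin => ?_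
  set e : ℝ≥0 := ε / (Λ 1 + 3) with he
  have hepos : 0 < e := div_pos hε (by positivity)
  refine le_trans (key e hepos) ?_
  have h1 : (e : ℝ≥0∞) * (Λ 1) + (e : ℝ≥0∞) + (e : ℝ≥0∞) ≤ (ε : ℝ≥0∞) := by
    have h2 : e * (Λ 1) + e + e ≤ ε := by
      have h3 : e * (Λ 1 + 3) ≤ ε := by
        rw [he, div_eq_mul_inv, mul_assoc, mul_comm (Λ 1 + 3)⁻¹, mul_inv_cancel₀ (by positivity),
          mul_one]
      calc e * Λ 1 + e + e ≤ e * Λ 1 + e + e + e := le_add_of_nonneg_right (by positivity)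
        _ = e * (Λ 1 + 3) := by ring
        _ ≤ ε := h3
    calc (e : ℝ≥0∞) * (Λ 1) + (e : ℝ≥0∞) + (e : ℝ≥0∞)
        = ((e * (Λ 1) + e + e : ℝ≥0) : ℝ≥0∞) := by push_cast; rfl
      _ ≤ (ε : ℝ≥0∞) := ENNReal.coe_le_coe.2 h2
  calc (∫⁻ ω, (f ω : ℝ≥0∞) ∂μ) + (e : ℝ≥0∞) * (Λ 1) + (e : ℝ≥0∞) + (e : ℝ≥0∞)
      = (∫⁻ ω, (f ω : ℝ≥0∞) ∂μ) + ((e : ℝ≥0∞) * (Λ 1) + (e : ℝ≥0∞) + (e : ℝ≥0∞)) := by ring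
    _ ≤ (∫⁻ ω, (f ω : ℝ≥0∞) ∂μ) + (ε : ℝ≥0∞) := add_le_add le_rfl h1


lemma lintegral_bcRieszMeasure (f : Ω →ᵇ ℝ≥0) :
    ∫⁻ ω, (f ω : ℝ≥0∞) ∂(bcRieszMeasure Λ) = Λ f := by
  set μ := bcRieszMeasure Λ with hμ
  have hfm : Measurable fun ω => (f ω : ℝ≥0∞) :=
    measurable_coe_nnreal_ennreal.comp f.continuous.measurable
  obtain ⟨M, hM⟩ : ∃ M : ℝ≥0, ∀ ω, f ω ≤ M := by
    obtain ⟨M, hMb⟩ := (isCompact_range f.continuous).bddAbove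
    exact ⟨M, fun ω => hMb (Set.mem_range_self ω)⟩
  set cM : Ω →ᵇ ℝ≥0 := BoundedContinuousFunction.const Ω M with hcM
  have hMc : ∀ ω, f ω ≤ cM ω := hM
  set g : Ω →ᵇ ℝ≥0 := bsub cM f with hgdef
  have hgm : Measurable fun ω => (g ω : ℝ≥0∞) :=
    measurable_coe_nnreal_ennreal.comp g.continuous.measurable
  have hfgc : f + g = cM := add_bsub hMc
  have hconst : cM = M • (1 : Ω →ᵇ ℝ≥0) := by
    ext ω
    simp [hcM]
  have hΛsum : Λ f + Λ g = M * Λ 1 := by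
    rw [← map_add, hfgc, hconst, LinearMap.map_smul, smul_eq_mul]
  have hIsum : (∫⁻ ω, (f ω : ℝ≥0∞) ∂μ) + (∫⁻ ω, (g ω : ℝ≥0∞) ∂μ)
      = (M : ℝ≥0∞) * (Λ 1 : ℝ≥0∞) := by
    rw [← lintegral_add_left hfm]
    have : ∀ ω, ((f ω : ℝ≥0∞) + (g ω : ℝ≥0∞)) = ((M : ℝ≥0) : ℝ≥0∞) := by
      intro ω
      have : f ω + g ω = M := by
        have := congrArg (fun h : Ω →ᵇ ℝ≥0 => h ω) hfgc
        simpa [hcM] using this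
      rw [← this]
      push_cast
      rfl
    calc (∫⁻ ω, ((f ω : ℝ≥0∞) + (g ω : ℝ≥0∞)) ∂μ) = ∫⁻ _ω, ((M : ℝ≥0) : ℝ≥0∞) ∂μ := by
          exact lintegral_congr this
      _ = (M : ℝ≥0∞) * μ univ := lintegral_const _
      _ = (M : ℝ≥0∞) * (Λ 1 : ℝ≥0∞) := by rw [hμ, bcRieszMeasure_univ]
  have hfin : (∫⁻ ω, (f ω : ℝ≥0∞) ∂μ) ≠ ⊤ := by
    intro h
    rw [h] at hIsum
    simp only [top_add] at hIsum
    exact (ENNReal.mul_ne_top ENNReal.coe_ne_top ENNReal.coe_ne_top) hIsum.symm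
  refine le_antisymm ?_ (lam_le_lintegral Λ f)
  have h1 : (∫⁻ ω, (f ω : ℝ≥0∞) ∂μ) + (Λ g : ℝ≥0∞) ≤ (Λ f : ℝ≥0∞) + (Λ g : ℝ≥0∞) := by
    calc (∫⁻ ω, (f ω : ℝ≥0∞) ∂μ) + (Λ g : ℝ≥0∞)
        ≤ (∫⁻ ω, (f ω : ℝ≥0∞) ∂μ) + (∫⁻ ω, (g ω : ℝ≥0∞) ∂μ) :=
          add_le_add le_rfl (lam_le_lintegral Λ g)
      _ = (M : ℝ≥0∞) * (Λ 1 : ℝ≥0∞) := hIsum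
      _ = ((M * Λ 1 : ℝ≥0) : ℝ≥0∞) := by push_cast; rfl
      _ = ((Λ f + Λ g : ℝ≥0) : ℝ≥0∞) := by rw [hΛsum]
      _ = (Λ f : ℝ≥0∞) + (Λ g : ℝ≥0∞) := by push_cast; rfl
  exact (ENNReal.add_le_add_iff_right ENNReal.coe_ne_top).1 h1

lemma integrable_coe_bcf (ν : Measure Ω) [IsFiniteMeasure ν] (f : Ω →ᵇ ℝ≥0) :
    Integrable (fun ω => (f ω : ℝ)) ν := by
  set fR : Ω →ᵇ ℝ := BoundedContinuousFunction.mkOfCompact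
    ⟨fun ω => (f ω : ℝ), NNReal.continuous_coe.comp f.continuous⟩ with hfR
  exact fR.integrable ν

lemma integral_bcRieszMeasure (f : Ω →ᵇ ℝ≥0) :
    ∫ ω, (f ω : ℝ) ∂(bcRieszMeasure Λ) = Λ f := by
  have hint := integrable_coe_bcf (bcRieszMeasure Λ) f
  have h1 := lintegral_coe_eq_integral (fun ω => f ω) hint
  rw [lintegral_bcRieszMeasure] at h1
  have h2 : (0 : ℝ) ≤ ∫ ω, (f ω : ℝ) ∂(bcRieszMeasure Λ) :=
    integral_nonneg fun ω => (f ω).coe_nonneg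
  have := congrArg ENNReal.toReal h1
  rw [ENNReal.coe_toReal, ENNReal.toReal_ofReal h2] at this
  exact this.symm

end Measure

section Decomposition

variable [MeasurableSpace Ω] [BorelSpace Ω]

variable (Φ : C(Ω, ℝ) →L[ℝ] ℝ)

/-- The admissible set for the positive part. -/
def admis (f : C(Ω, ℝ)) : Set C(Ω, ℝ) := {g | 0 ≤ g ∧ g ≤ f}

/-- The positive part functional (on nonnegative `f`). -/
def posP (f : C(Ω, ℝ)) : ℝ := sSup ((fun g => Φ g) '' admis f)

variable {Φ}

lemma admis_nonempty {f : C(Ω, ℝ)} (hf : 0 ≤ f) : ((fun g => Φ g) '' admis f).Nonempty :=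
  ⟨Φ 0, 0, ⟨le_refl 0, hf⟩, rfl⟩

lemma admis_bddAbove (f : C(Ω, ℝ)) : BddAbove ((fun g => Φ g) '' admis f) := by
  refine ⟨‖Φ‖ * ‖f‖, ?_⟩
  rintro b ⟨g, ⟨hg0, hgf⟩, rfl⟩
  have hgn : ‖g‖ ≤ ‖f‖ := by
    refine (ContinuousMap.norm_le g (norm_nonneg f)).2 fun x => ?_
    have h0 : (0:ℝ) ≤ g x := hg0 x
    have h1 : g x ≤ f x := hgf x
    rw [Real.norm_eq_abs, abs_of_nonneg h0]
    exact le_trans h1 (le_trans (le_abs_self _) (f.norm_coe_le_norm x))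
  calc Φ g ≤ ‖Φ g‖ := le_abs_self _
    _ ≤ ‖Φ‖ * ‖g‖ := Φ.le_opNorm g
    _ ≤ ‖Φ‖ * ‖f‖ := mul_le_mul_of_nonneg_left hgn (norm_nonneg Φ)

lemma le_posP {f g : C(Ω, ℝ)} (hg : g ∈ admis f) : Φ g ≤ posP Φ f :=
  le_csSup (admis_bddAbove f) ⟨g, hg, rfl⟩

lemma posP_nonneg {f : C(Ω, ℝ)} (hf : 0 ≤ f) : 0 ≤ posP Φ f := by
  have := le_posP (Φ := Φ) (⟨le_refl 0, hf⟩ : (0:C(Ω,ℝ)) ∈ admis f)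
  simpa using this

lemma self_le_posP {f : C(Ω, ℝ)} (hf : 0 ≤ f) : Φ f ≤ posP Φ f :=
  le_posP ⟨hf, le_refl f⟩

lemma posP_add {f₁ f₂ : C(Ω, ℝ)} (hf₁ : 0 ≤ f₁) (hf₂ : 0 ≤ f₂) :
    posP Φ (f₁ + f₂) = posP Φ f₁ + posP Φ f₂ := by
  refine le_antisymm ?_ ?_
  · refine csSup_le (admis_nonempty (by positivity)) ?_
    rintro b ⟨g, ⟨hg0, hgf⟩, rfl⟩
    set g₁ : C(Ω, ℝ) := g ⊓ f₁ with hg₁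
    set g₂ : C(Ω, ℝ) := g - g₁ with hg₂
    have hg₁0 : 0 ≤ g₁ := le_inf hg0 hf₁
    have hg₁f : g₁ ≤ f₁ := inf_le_right
    have happly : ∀ a, g₂ a = g a - (g a ⊓ f₁ a) := by
      intro a
      rw [hg₂, ContinuousMap.sub_apply, hg₁, ContinuousMap.inf_apply]
    have hg₂0 : 0 ≤ g₂ := by
      rw [ContinuousMap.le_def]
      intro a
      rw [ContinuousMap.zero_apply, happly a]
      have : g a ⊓ f₁ a ≤ g a := min_le_left _ _
      linarith
    have hg₂f : g₂ ≤ f₂ := by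
      rw [ContinuousMap.le_def]
      intro a
      rw [happly a]
      rcases le_total (g a) (f₁ a) with h | h
      · rw [min_eq_left h]
        have h2 := (ContinuousMap.le_def.1 hf₂) a
        rw [ContinuousMap.zero_apply] at h2
        linarith
      · rw [min_eq_right h]
        have h2 := (ContinuousMap.le_def.1 hgf) a
        rw [ContinuousMap.add_apply] at h2
        linarith
    have hsplit : Φ g = Φ g₁ + Φ g₂ := by
      rw [hg₂, map_sub]
      ring
    show Φ g ≤ posP Φ f₁ + posP Φ f₂
    rw [hsplit]
    exact add_le_add (le_posP ⟨hg₁0, hg₁f⟩) (le_posP ⟨hg₂0, hg₂f⟩)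
  · have H : ∀ a ∈ (fun g => Φ g) '' admis f₁, ∀ b ∈ (fun g => Φ g) '' admis f₂,
        a + b ≤ posP Φ (f₁ + f₂) := by
      rintro a ⟨g₁, ⟨hg₁0, hg₁f⟩, rfl⟩ b ⟨g₂, ⟨hg₂0, hg₂f⟩, rfl⟩
      have : Φ g₁ + Φ g₂ = Φ (g₁ + g₂) := (map_add Φ g₁ g₂).symm
      rw [this]
      exact le_posP ⟨by positivity, add_le_add hg₁f hg₂f⟩
    have h1 : posP Φ f₁ ≤ posP Φ (f₁ + f₂) - posP Φ f₂ := by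
      refine csSup_le (admis_nonempty hf₁) fun a ha => ?_
      have h2 : posP Φ f₂ ≤ posP Φ (f₁ + f₂) - a :=
        csSup_le (admis_nonempty hf₂) fun b hb => by linarith [H a ha b hb]
      linarith
    linarith

lemma posP_smul {f : C(Ω, ℝ)} (hf : 0 ≤ f) (c : ℝ) (hc : 0 ≤ c) :
    posP Φ (c • f) = c * posP Φ f := by
  rcases eq_or_lt_of_le hc with rfl | hc'
  · simp only [zero_smul, zero_mul]
    have : (fun g => Φ g) '' admis (0 : C(Ω, ℝ)) = {0} := by
      ext b
      constructor
      · rintro ⟨g, ⟨hg0, hgf⟩, rfl⟩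
        have : g = 0 := le_antisymm hgf hg0
        simp [this]
      · rintro rfl
        exact ⟨0, ⟨le_refl 0, le_refl 0⟩, map_zero Φ⟩
    rw [posP, this, csSup_singleton]
  · refine le_antisymm ?_ ?_
    · refine csSup_le (admis_nonempty (smul_nonneg hc hf)) ?_
      rintro b ⟨g, ⟨hg0, hgf⟩, rfl⟩
      have hgi : c⁻¹ • g ∈ admis f := by
        constructor
        · exact smul_nonneg (by positivity) hg0
        · rw [ContinuousMap.le_def] at hgf ⊢
          intro a
          have := hgf a
          simp only [ContinuousMap.smul_apply, smul_eq_mul] at this ⊢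
          rw [inv_mul_le_iff₀ hc']
          linarith [this]
      have hΦg : Φ g = c * Φ (c⁻¹ • g) := by
        rw [Φ.map_smul, smul_eq_mul, ← mul_assoc, mul_inv_cancel₀ (ne_of_gt hc'), one_mul]
      show Φ g ≤ c * posP Φ f
      rw [hΦg]
      exact mul_le_mul_of_nonneg_left (le_posP hgi) hc
    · rw [← le_div_iff₀' hc']
      refine csSup_le (admis_nonempty hf) ?_
      rintro b ⟨g, ⟨hg0, hgf⟩, rfl⟩
      rw [le_div_iff₀' hc']
      have hcg : c * Φ g = Φ (c • g) := by rw [Φ.map_smul, smul_eq_mul]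
      show c * Φ g ≤ posP Φ (c • f)
      rw [hcg]
      refine le_posP ⟨smul_nonneg hc hg0, ?_⟩
      rw [ContinuousMap.le_def] at hgf ⊢
      intro a
      simp only [ContinuousMap.smul_apply, smul_eq_mul]
      exact mul_le_mul_of_nonneg_left (hgf a) hc


variable (Φ)

/-- coercion of a nonnegative bcf to a real continuous map -/
def toC (f : Ω →ᵇ ℝ≥0) : C(Ω, ℝ) :=
  ⟨fun ω => (f ω : ℝ), NNReal.continuous_coe.comp f.continuous⟩

lemma toC_apply (f : Ω →ᵇ ℝ≥0) (ω : Ω) : toC f ω = (f ω : ℝ) := rfl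

lemma toC_nonneg (f : Ω →ᵇ ℝ≥0) : 0 ≤ toC f := by
  rw [ContinuousMap.le_def]
  intro a
  exact (f a).coe_nonneg

lemma toC_add (f g : Ω →ᵇ ℝ≥0) : toC (f + g) = toC f + toC g := by
  ext ω
  simp [toC_apply]

lemma toC_smul (c : ℝ≥0) (f : Ω →ᵇ ℝ≥0) : toC (c • f) = (c : ℝ) • toC f := by
  ext ω
  simp only [toC_apply, ContinuousMap.smul_apply, smul_eq_mul]
  rw [show (c • f) ω = c * f ω from rfl]
  push_cast
  rfl

/-- The positive part of `Φ` as an `ℝ≥0`-linear functional. -/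
def lamPos : (Ω →ᵇ ℝ≥0) →ₗ[ℝ≥0] ℝ≥0 where
  toFun f := Real.toNNReal (posP Φ (toC f))
  map_add' f g := by
    rw [toC_add, posP_add (toC_nonneg f) (toC_nonneg g),
      Real.toNNReal_add (posP_nonneg (toC_nonneg f)) (posP_nonneg (toC_nonneg g))]
  map_smul' c f := by
    simp only [RingHom.id_apply]
    rw [toC_smul, posP_smul (toC_nonneg f) (c : ℝ) c.coe_nonneg,
      Real.toNNReal_mul c.coe_nonneg, Real.toNNReal_coe, smul_eq_mul]

/-- The negative part of `Φ` as an `ℝ≥0`-linear functional. -/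
def lamNeg : (Ω →ᵇ ℝ≥0) →ₗ[ℝ≥0] ℝ≥0 where
  toFun f := Real.toNNReal (posP Φ (toC f) - Φ (toC f))
  map_add' f g := by
    rw [toC_add, posP_add (toC_nonneg f) (toC_nonneg g), map_add]
    have h1 : 0 ≤ posP Φ (toC f) - Φ (toC f) := by
      have := self_le_posP (Φ := Φ) (toC_nonneg f)
      linarith
    have h2 : 0 ≤ posP Φ (toC g) - Φ (toC g) := by
      have := self_le_posP (Φ := Φ) (toC_nonneg g)
      linarith
    rw [show posP Φ (toC f) + posP Φ (toC g) - (Φ (toC f) + Φ (toC g))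
        = (posP Φ (toC f) - Φ (toC f)) + (posP Φ (toC g) - Φ (toC g)) by ring]
    rw [Real.toNNReal_add h1 h2]
  map_smul' c f := by
    simp only [RingHom.id_apply]
    rw [toC_smul, posP_smul (toC_nonneg f) (c : ℝ) c.coe_nonneg, Φ.map_smul, smul_eq_mul]
    rw [show (c : ℝ) * posP Φ (toC f) - (c : ℝ) * Φ (toC f)
        = (c : ℝ) * (posP Φ (toC f) - Φ (toC f)) by ring]
    rw [Real.toNNReal_mul c.coe_nonneg, Real.toNNReal_coe, smul_eq_mul]

lemma phi_eq_nonneg (f : Ω →ᵇ ℝ≥0) :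
    Φ (toC f) = (∫ ω, (f ω : ℝ) ∂(bcRieszMeasure (lamPos Φ)))
      - ∫ ω, (f ω : ℝ) ∂(bcRieszMeasure (lamNeg Φ)) := by
  rw [integral_bcRieszMeasure, integral_bcRieszMeasure]
  have h1 : ((lamPos Φ f : ℝ≥0) : ℝ) = posP Φ (toC f) := by
    rw [show lamPos Φ f = Real.toNNReal (posP Φ (toC f)) from rfl]
    exact Real.coe_toNNReal _ (posP_nonneg (toC_nonneg f))
  have h2 : ((lamNeg Φ f : ℝ≥0) : ℝ) = posP Φ (toC f) - Φ (toC f) := by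
    rw [show lamNeg Φ f = Real.toNNReal (posP Φ (toC f) - Φ (toC f)) from rfl]
    refine Real.coe_toNNReal _ ?_
    have := self_le_posP (Φ := Φ) (toC_nonneg f)
    linarith
  rw [h1, h2]
  ring

/-- Representation of a real continuous functional on `C(Ω, ℝ)`. -/
theorem phi_eq (h : C(Ω, ℝ)) :
    Φ h = (∫ ω, h ω ∂(bcRieszMeasure (lamPos Φ)))
      - ∫ ω, h ω ∂(bcRieszMeasure (lamNeg Φ)) := by
  set fP : Ω →ᵇ ℝ≥0 := BoundedContinuousFunction.mkOfCompact
    ⟨fun ω => Real.toNNReal (h ω), continuous_real_toNNReal.comp h.continuous⟩ with hfP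
  set fM : Ω →ᵇ ℝ≥0 := BoundedContinuousFunction.mkOfCompact
    ⟨fun ω => Real.toNNReal (-(h ω)), continuous_real_toNNReal.comp h.continuous.neg⟩ with hfM
  have hdiff : ∀ ω, h ω = (fP ω : ℝ) - (fM ω : ℝ) := by
    intro ω
    rw [show (fP ω : ℝ) = ((Real.toNNReal (h ω) : ℝ≥0) : ℝ) from rfl,
      show (fM ω : ℝ) = ((Real.toNNReal (-(h ω)) : ℝ≥0) : ℝ) from rfl,
      Real.coe_toNNReal', Real.coe_toNNReal']
    exact (max_zero_sub_eq_self (h ω)).symm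
  have hsplit : h = toC fP - toC fM := by
    ext ω
    rw [ContinuousMap.sub_apply, toC_apply, toC_apply]
    exact hdiff ω
  have hint : ∀ ν : Measure Ω, ∀ _ : IsFiniteMeasure ν,
      ∫ ω, h ω ∂ν = (∫ ω, (fP ω : ℝ) ∂ν) - ∫ ω, (fM ω : ℝ) ∂ν := by
    intro ν hν
    rw [← integral_sub (integrable_coe_bcf ν fP) (integrable_coe_bcf ν fM)]
    exact integral_congr_ae (Filter.Eventually.of_forall fun ω => hdiff ω)
  rw [hsplit, map_sub, phi_eq_nonneg Φ fP, phi_eq_nonneg Φ fM, ← hsplit,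
    hint _ inferInstance, hint _ inferInstance]
  ring

end Decomposition

section Jordan

variable [MeasurableSpace Ω] [BorelSpace Ω]

lemma integrable_ccf (ν : Measure Ω) [IsFiniteMeasure ν] (F : C(Ω, ℂ)) :
    Integrable (fun ω => F ω) ν :=
  (BoundedContinuousFunction.mkOfCompact F).integrable ν

lemma integral_jordan (μ₁ μ₂ : Measure Ω) [IsFiniteMeasure μ₁] [IsFiniteMeasure μ₂]
    (F : C(Ω, ℂ)) :
    (∫ ω, F ω ∂(μ₁.toSignedMeasure - μ₂.toSignedMeasure).toJordanDecomposition.posPart)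
      - (∫ ω, F ω ∂(μ₁.toSignedMeasure - μ₂.toSignedMeasure).toJordanDecomposition.negPart)
    = (∫ ω, F ω ∂μ₁) - ∫ ω, F ω ∂μ₂ := by
  set s := μ₁.toSignedMeasure - μ₂.toSignedMeasure with hs
  set P := s.toJordanDecomposition.posPart with hP
  set N := s.toJordanDecomposition.negPart with hN
  have hsig : P.toSignedMeasure - N.toSignedMeasure = μ₁.toSignedMeasure - μ₂.toSignedMeasure := by
    have h0 : s.toJordanDecomposition.toSignedMeasure = s := s.toSignedMeasure_toJordanDecomposition
    rw [JordanDecomposition.toSignedMeasure] at h0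
    exact h0.trans hs
  have hmeas : μ₁ + N = P + μ₂ := by
    refine Measure.ext fun E hE => ?_
    have h1 := congrArg (fun t : SignedMeasure Ω => t E) hsig
    simp only [VectorMeasure.sub_apply] at h1
    rw [Measure.toSignedMeasure_apply_measurable hE, Measure.toSignedMeasure_apply_measurable hE,
      Measure.toSignedMeasure_apply_measurable hE, Measure.toSignedMeasure_apply_measurable hE]
      at h1
    have h2 : (μ₁ E).toReal + (N E).toReal = (P E).toReal + (μ₂ E).toReal := by
      simp only [measureReal_def] at h1
      linarith
    have h3 : ((μ₁ + N) E).toReal = ((P + μ₂) E).toReal := by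
      rw [Measure.add_apply, Measure.add_apply,
        ENNReal.toReal_add (measure_ne_top _ _) (measure_ne_top _ _),
        ENNReal.toReal_add (measure_ne_top _ _) (measure_ne_top _ _)]
      exact h2
    exact (ENNReal.toReal_eq_toReal_iff'
      (by rw [Measure.add_apply]; exact ENNReal.add_ne_top.2 ⟨measure_ne_top _ _, measure_ne_top _ _⟩)
      (by rw [Measure.add_apply]; exact ENNReal.add_ne_top.2 ⟨measure_ne_top _ _, measure_ne_top _ _⟩)).1 h3
  have hint : (∫ ω, F ω ∂μ₁) + (∫ ω, F ω ∂N) = (∫ ω, F ω ∂P) + ∫ ω, F ω ∂μ₂ := by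
    rw [← integral_add_measure (integrable_ccf μ₁ F) (integrable_ccf N F),
      ← integral_add_measure (integrable_ccf P F) (integrable_ccf μ₂ F), hmeas]
  linear_combination -hint

lemma integral_complex_decomp (ν : Measure Ω) [IsFiniteMeasure ν] (F : C(Ω, ℂ)) :
    ∫ ω, F ω ∂ν = ((∫ ω, (F ω).re ∂ν : ℝ) : ℂ) + Complex.I * ((∫ ω, (F ω).im ∂ν : ℝ) : ℂ) := by
  have hre : Integrable (fun ω => ((F ω).re : ℂ)) ν := by
    have := integrable_ccf ν ⟨fun ω => (((F ω).re : ℝ) : ℂ),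
      Complex.continuous_ofReal.comp (Complex.continuous_re.comp F.continuous)⟩
    exact this
  have him : Integrable (fun ω => Complex.I * ((F ω).im : ℂ)) ν := by
    have := integrable_ccf ν ⟨fun ω => Complex.I * (((F ω).im : ℝ) : ℂ),
      (continuous_const.mul (Complex.continuous_ofReal.comp (Complex.continuous_im.comp F.continuous)))⟩
    exact this
  calc ∫ ω, F ω ∂ν = ∫ ω, (((F ω).re : ℂ) + Complex.I * ((F ω).im : ℂ)) ∂ν := by
        refine integral_congr_ae (Filter.Eventually.of_forall fun ω => ?_)
        show F ω = ((F ω).re : ℂ) + Complex.I * ((F ω).im : ℂ)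
        rw [mul_comm]
        exact (Complex.re_add_im (F ω)).symm
    _ = (∫ ω, ((F ω).re : ℂ) ∂ν) + ∫ ω, Complex.I * ((F ω).im : ℂ) ∂ν :=
        integral_add hre him
    _ = ((∫ ω, (F ω).re ∂ν : ℝ) : ℂ) + Complex.I * ((∫ ω, (F ω).im ∂ν : ℝ) : ℂ) := by
        have hco : ∀ G : Ω → ℝ, ∫ ω, ((G ω : ℝ) : ℂ) ∂ν = ((∫ ω, G ω ∂ν : ℝ) : ℂ) :=
          fun G => integral_ofReal
        rw [MeasureTheory.integral_const_mul Complex.I fun ω => ((F ω).im : ℂ),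
          hco, hco]


/-- real part of a complex continuous map -/
def reC (F : C(Ω, ℂ)) : C(Ω, ℝ) := ⟨fun ω => (F ω).re, Complex.continuous_re.comp F.continuous⟩

/-- imaginary part of a complex continuous map -/
def imC (F : C(Ω, ℂ)) : C(Ω, ℝ) := ⟨fun ω => (F ω).im, Complex.continuous_im.comp F.continuous⟩

end Jordan

end RMK

open BoundedContinuousFunction NNReal Set


/-- Every continuous linear functional on a normed complex vector space `X`
whose norm is computed by a compact Hausdorff family `Ω` of functionals (via `j`) is
represented by integration against a complex Borel measure on `Ω`. -/
theorem stmt0 {X : Type*} [NormedAddCommGroup X] [NormedSpace ℂ X]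
    {Ω : Type*} [TopologicalSpace Ω] [CompactSpace Ω] [T2Space Ω]
    [MeasurableSpace Ω] [BorelSpace Ω]
    (j : Ω → (X →L[ℂ] ℂ))
    (hcont : ∀ x : X, Continuous fun ω => j ω x)
    (hnorm : ∀ x : X, ‖x‖ = ⨆ ω : Ω, ‖j ω x‖)
    (ℓstar : X →L[ℂ] ℂ) :
    ∃ ρ : ComplexMeasure Ω, ∀ x : X,
      ℓstar x =
        ((∫ ω, j ω x ∂(ComplexMeasure.re ρ).toJordanDecomposition.posPart)
          - (∫ ω, j ω x ∂(ComplexMeasure.re ρ).toJordanDecomposition.negPart))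
        + Complex.I *
          ((∫ ω, j ω x ∂(ComplexMeasure.im ρ).toJordanDecomposition.posPart)
            - (∫ ω, j ω x ∂(ComplexMeasure.im ρ).toJordanDecomposition.negPart)) := by
  classical
  -- the isometric embedding x ↦ (ω ↦ j ω x)
  let T : X →ₗ[ℂ] C(Ω, ℂ) :=
    { toFun := fun x => ⟨fun ω => j ω x, hcont x⟩
      map_add' := fun x y => by ext ω; simp
      map_smul' := fun c x => by ext ω; simp }
  have hT_apply : ∀ x ω, (T x) ω = j ω x := fun x ω => rfl
  have hTnorm : ∀ x, ‖T x‖ = ‖x‖ := by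
    intro x
    rw [hnorm x, ContinuousMap.norm_eq_iSup_norm]
    rfl
  have hTinj : Function.Injective T := by
    intro x y hxy
    have h1 : ‖x - y‖ = 0 := by
      rw [← hTnorm, map_sub, hxy, sub_self, norm_zero]
    simpa [sub_eq_zero] using norm_eq_zero.1 h1
  let e := LinearEquiv.ofInjective T hTinj
  let f₀ : (LinearMap.range T) →ₗ[ℂ] ℂ := ℓstar.toLinearMap.comp e.symm.toLinearMap
  have hf₀ : ∀ y : LinearMap.range T, ‖f₀ y‖ ≤ ‖ℓstar‖ * ‖y‖ := by
    intro y
    obtain ⟨x, rfl⟩ : ∃ x, e x = y := ⟨e.symm y, e.apply_symm_apply y⟩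
    have h1 : f₀ (e x) = ℓstar x := by
      show ℓstar (e.symm (e x)) = ℓstar x
      rw [e.symm_apply_apply]
    have h3 : ((e x : LinearMap.range T) : C(Ω, ℂ)) = T x :=
      LinearEquiv.ofInjective_apply T (h := hTinj) x
    have h2 : ‖(e x : LinearMap.range T)‖ = ‖x‖ := by
      rw [show ‖(e x : LinearMap.range T)‖ = ‖((e x : LinearMap.range T) : C(Ω, ℂ))‖ from rfl,
        h3, hTnorm]
    rw [h1, h2]
    exact ℓstar.le_opNorm x
  let f₀c : (LinearMap.range T) →L[ℂ] ℂ := f₀.mkContinuous ‖ℓstar‖ hf₀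
  obtain ⟨Λc, hΛc, -⟩ := exists_extension_norm_eq (LinearMap.range T) f₀c
  have hΛcT : ∀ x, Λc (T x) = ℓstar x := by
    intro x
    have h1 := hΛc (e x)
    have h3 : ((e x : LinearMap.range T) : C(Ω, ℂ)) = T x :=
      LinearEquiv.ofInjective_apply T (h := hTinj) x
    rw [h3] at h1
    rw [h1]
    show ℓstar (e.symm (e x)) = ℓstar x
    rw [e.symm_apply_apply]
  -- real and imaginary part functionals
  let ι : C(Ω, ℝ) →ₗ[ℝ] C(Ω, ℂ) :=
    ContinuousLinearMap.compLeftContinuous ℝ Ω Complex.ofRealCLM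
  have hι : ∀ (g : C(Ω, ℝ)) ω, (ι g) ω = (g ω : ℂ) := fun g ω => rfl
  have hιnorm : ∀ g : C(Ω, ℝ), ‖ι g‖ ≤ ‖g‖ := by
    intro g
    refine (ContinuousMap.norm_le _ (norm_nonneg g)).2 fun ω => ?_
    rw [hι]
    rw [Complex.norm_real]
    exact g.norm_coe_le_norm ω
  let Φre₀ : C(Ω, ℝ) →ₗ[ℝ] ℝ :=
    Complex.reLm.comp ((Λc.restrictScalars ℝ).toLinearMap.comp ι)
  let Φim₀ : C(Ω, ℝ) →ₗ[ℝ] ℝ :=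
    Complex.imLm.comp ((Λc.restrictScalars ℝ).toLinearMap.comp ι)
  have hΦre₀ : ∀ g, ‖Φre₀ g‖ ≤ ‖Λc‖ * ‖g‖ := by
    intro g
    calc ‖Φre₀ g‖ = ‖(Λc (ι g)).re‖ := rfl
      _ ≤ ‖Λc (ι g)‖ := by
          rw [Real.norm_eq_abs]
          exact Complex.abs_re_le_norm _
      _ ≤ ‖Λc‖ * ‖ι g‖ := Λc.le_opNorm _
      _ ≤ ‖Λc‖ * ‖g‖ := mul_le_mul_of_nonneg_left (hιnorm g) (norm_nonneg Λc)
  have hΦim₀ : ∀ g, ‖Φim₀ g‖ ≤ ‖Λc‖ * ‖g‖ := by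
    intro g
    calc ‖Φim₀ g‖ = ‖(Λc (ι g)).im‖ := rfl
      _ ≤ ‖Λc (ι g)‖ := by
          rw [Real.norm_eq_abs]
          exact Complex.abs_im_le_norm _
      _ ≤ ‖Λc‖ * ‖ι g‖ := Λc.le_opNorm _
      _ ≤ ‖Λc‖ * ‖g‖ := mul_le_mul_of_nonneg_left (hιnorm g) (norm_nonneg Λc)
  let Φre : C(Ω, ℝ) →L[ℝ] ℝ := Φre₀.mkContinuous ‖Λc‖ hΦre₀
  let Φim : C(Ω, ℝ) →L[ℝ] ℝ := Φim₀.mkContinuous ‖Λc‖ hΦim₀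
  have hΦre_apply : ∀ g, Φre g = (Λc (ι g)).re := fun g => rfl
  have hΦim_apply : ∀ g, Φim g = (Λc (ι g)).im := fun g => rfl
  -- the four measures
  let μ1 := bcRieszMeasure (lamPos Φre)
  let μ2 := bcRieszMeasure (lamNeg Φre)
  let μ3 := bcRieszMeasure (lamPos Φim)
  let μ4 := bcRieszMeasure (lamNeg Φim)
  refine ⟨MeasureTheory.SignedMeasure.toComplexMeasure
    (μ1.toSignedMeasure - μ2.toSignedMeasure) (μ3.toSignedMeasure - μ4.toSignedMeasure), ?_⟩
  intro x
  set F : C(Ω, ℂ) := T x with hF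
  -- decomposition of Λc F
  have hFsplit : F = ι (reC F) + Complex.I • ι (imC F) := by
    ext ω
    simp only [ContinuousMap.add_apply, ContinuousMap.smul_apply, hι, smul_eq_mul]
    rw [show (reC F) ω = (F ω).re from rfl, show (imC F) ω = (F ω).im from rfl, mul_comm]
    exact (Complex.re_add_im (F ω)).symm
  have hΛι : ∀ g : C(Ω, ℝ), Λc (ι g) = ((Φre g : ℝ) : ℂ) + ((Φim g : ℝ) : ℂ) * Complex.I := by
    intro g
    rw [hΦre_apply, hΦim_apply]
    exact (Complex.re_add_im (Λc (ι g))).symm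
  have hΛF : Λc F = (((Φre (reC F) : ℝ) : ℂ) + ((Φim (reC F) : ℝ) : ℂ) * Complex.I)
      + Complex.I * (((Φre (imC F) : ℝ) : ℂ) + ((Φim (imC F) : ℝ) : ℂ) * Complex.I) := by
    calc Λc F = Λc (ι (reC F) + Complex.I • ι (imC F)) := by rw [← hFsplit]
      _ = Λc (ι (reC F)) + Complex.I * Λc (ι (imC F)) := by
          rw [map_add, Λc.map_smul, smul_eq_mul]
      _ = _ := by rw [hΛι, hΛι]
  -- functional representations
  have hre1 : Φre (reC F) = (∫ ω, (F ω).re ∂μ1) - ∫ ω, (F ω).re ∂μ2 := phi_eq Φre (reC F)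
  have hre2 : Φre (imC F) = (∫ ω, (F ω).im ∂μ1) - ∫ ω, (F ω).im ∂μ2 := phi_eq Φre (imC F)
  have him1 : Φim (reC F) = (∫ ω, (F ω).re ∂μ3) - ∫ ω, (F ω).re ∂μ4 := phi_eq Φim (reC F)
  have him2 : Φim (imC F) = (∫ ω, (F ω).im ∂μ3) - ∫ ω, (F ω).im ∂μ4 := phi_eq Φim (imC F)
  -- rewrite the goal
  have hgoal : ((∫ ω, j ω x
        ∂(ComplexMeasure.re (MeasureTheory.SignedMeasure.toComplexMeasure
          (μ1.toSignedMeasure - μ2.toSignedMeasure)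
          (μ3.toSignedMeasure - μ4.toSignedMeasure))).toJordanDecomposition.posPart)
      - (∫ ω, j ω x
        ∂(ComplexMeasure.re (MeasureTheory.SignedMeasure.toComplexMeasure
          (μ1.toSignedMeasure - μ2.toSignedMeasure)
          (μ3.toSignedMeasure - μ4.toSignedMeasure))).toJordanDecomposition.negPart))
      + Complex.I * ((∫ ω, j ω x
        ∂(ComplexMeasure.im (MeasureTheory.SignedMeasure.toComplexMeasure
          (μ1.toSignedMeasure - μ2.toSignedMeasure)
          (μ3.toSignedMeasure - μ4.toSignedMeasure))).toJordanDecomposition.posPart)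
      - (∫ ω, j ω x
        ∂(ComplexMeasure.im (MeasureTheory.SignedMeasure.toComplexMeasure
          (μ1.toSignedMeasure - μ2.toSignedMeasure)
          (μ3.toSignedMeasure - μ4.toSignedMeasure))).toJordanDecomposition.negPart))
      = ((∫ ω, F ω ∂μ1) - ∫ ω, F ω ∂μ2)
        + Complex.I * ((∫ ω, F ω ∂μ3) - ∫ ω, F ω ∂μ4) := by
    rw [MeasureTheory.SignedMeasure.re_toComplexMeasure,
      MeasureTheory.SignedMeasure.im_toComplexMeasure]
    have e1 := integral_jordan μ1 μ2 F
    have e2 := integral_jordan μ3 μ4 F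
    rw [show (fun ω => j ω x) = fun ω => F ω from rfl]
    rw [e1, e2]
  rw [hgoal, ← hΛcT x]
  show Λc F = _
  rw [integral_complex_decomp μ1 F, integral_complex_decomp μ2 F,
    integral_complex_decomp μ3 F, integral_complex_decomp μ4 F, hΛF, hre1, hre2, him1, him2]
  push_cast
  ring
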